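/- For every set F of k edges of G, the maximum (s,t)-flow value of G − F equals the minimum, over all minimal (s,t)-cuts C of G with |C| ≤ λ + k, of the quantity |C| − |C ∩ F|. -/

import Mathlib

open Finset

/-- A finite directed multigraph on vertex type `V` with edge type `E`:
each edge `e` has a source `src e` and a target `tgt e`. -/
structure Digraph' (V E : Type) where
  src : E → V
  tgt : E → V

namespace Digraph'

variable {V E : Type} [Fintype V] [DecidableEq V] [Fintype E] [DecidableEq E]

/-- `h : E → ℕ` satisfies flow conservation at every vertex other than `s` and `t`:
the sum over incoming edges equals the sum over outgoing edges. -/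
def Conserves (G : Digraph' V E) (s t : V) (h : E → ℕ) : Prop :=
  ∀ v : V, v ≠ s → v ≠ t →
    ∑ e ∈ univ.filter (fun e => G.tgt e = v), h e =
      ∑ e ∈ univ.filter (fun e => G.src e = v), h e

/-- The value of `h`: the net flow out of `s`. -/
def flowValue (G : Digraph' V E) (s : V) (h : E → ℕ) : ℤ :=
  (∑ e ∈ univ.filter (fun e => G.src e = s), (h e : ℤ)) -
    ∑ e ∈ univ.filter (fun e => G.tgt e = s), (h e : ℤ)

/-- An `(s,t)`-flow of a unit-capacity digraph: a `{0,1}`-valued function on edges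
satisfying flow conservation at every vertex other than `s` and `t`. -/
def IsFlow (G : Digraph' V E) (s t : V) (f : E → ℕ) : Prop :=
  (∀ e, f e ≤ 1) ∧ G.Conserves s t f

/-- One step along an edge not belonging to `F`. -/
def stepAvoid (G : Digraph' V E) (F : Finset E) (u v : V) : Prop :=
  ∃ e, e ∉ F ∧ G.src e = u ∧ G.tgt e = v

/-- Reachability by a directed path using no edge of `F`. -/
def ReachAvoid (G : Digraph' V E) (F : Finset E) : V → V → Prop :=
  Relation.ReflTransGen (G.stepAvoid F)

/-- `C` is an `(s,t)`-cut: after deleting the edges of `C` there is no directed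
path from `s` to `t`. -/
def IsCut (G : Digraph' V E) (s t : V) (C : Finset E) : Prop :=
  ¬ G.ReachAvoid C s t

/-- An `(s,t)`-min-cut: an `(s,t)`-cut of minimum cardinality. -/
def IsMinCut (G : Digraph' V E) (s t : V) (C : Finset E) : Prop :=
  G.IsCut s t C ∧ ∀ C' : Finset E, G.IsCut s t C' → C.card ≤ C'.card

/-- A minimal `(s,t)`-cut: no proper subset of it is an `(s,t)`-cut. -/
def IsMinimalCut (G : Digraph' V E) (s t : V) (C : Finset E) : Prop :=
  G.IsCut s t C ∧ ∀ C' : Finset E, C' ⊂ C → ¬ G.IsCut s t C'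

/-- An edge is critical if it belongs to some `(s,t)`-min-cut. -/
def Critical (G : Digraph' V E) (s t : V) (e : E) : Prop :=
  ∃ C : Finset E, G.IsMinCut s t C ∧ e ∈ C

/-- `m` is the maximum `(s,t)`-flow value of `G − F`, i.e. the largest value of an
`(s,t)`-flow of `G` vanishing on every edge of `F`. -/
def IsMaxFlowValue (G : Digraph' V E) (s t : V) (F : Finset E) (m : ℤ) : Prop :=
  (∃ f, G.IsFlow s t f ∧ (∀ e ∈ F, f e = 0) ∧ G.flowValue s f = m) ∧
    ∀ f, G.IsFlow s t f → (∀ e ∈ F, f e = 0) → G.flowValue s f ≤ m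

/-- The residual graph `G_f` of a `{0,1}`-flow `f`: each edge with `f e = 1`
is reversed, each edge with `f e = 0` is kept as is. -/
def residual (G : Digraph' V E) (f : E → ℕ) : Digraph' V E where
  src e := if f e = 1 then G.tgt e else G.src e
  tgt e := if f e = 1 then G.src e else G.tgt e

end Digraph'


namespace Digraph'

variable {V E : Type} [Fintype V] [DecidableEq V] [Fintype E] [DecidableEq E]

set_option linter.unusedSectionVars false

-- ==================== auxiliary ====================

/-- Net divergence (out minus in) of `f` at a vertex, as an integer. -/
def DD (G : Digraph' V E) (f : E → ℕ) (v : V) : ℤ :=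
  (∑ e ∈ univ.filter (fun e => G.src e = v), (f e : ℤ)) -
    ∑ e ∈ univ.filter (fun e => G.tgt e = v), (f e : ℤ)

lemma flowValue_eq_DD (G : Digraph' V E) (s : V) (f : E → ℕ) :
    G.flowValue s f = G.DD f s := rfl

lemma DD_eq_zero (G : Digraph' V E) {s t : V} {f : E → ℕ} (hc : G.Conserves s t f)
    {v : V} (hvs : v ≠ s) (hvt : v ≠ t) : G.DD f v = 0 := by
  have h := hc v hvs hvt
  have h' : ((∑ e ∈ univ.filter (fun e => G.tgt e = v), f e : ℕ) : ℤ) =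
      ((∑ e ∈ univ.filter (fun e => G.src e = v), f e : ℕ) : ℤ) := by exact_mod_cast h
  push_cast at h'
  simp only [DD]
  omega

lemma value_eq_net (G : Digraph' V E) {s t : V} {f : E → ℕ} (hc : G.Conserves s t f)
    (p : V → Prop) [DecidablePred p] (hs : p s) (ht : ¬ p t) :
    G.flowValue s f =
      (∑ e ∈ univ.filter (fun e => p (G.src e) ∧ ¬ p (G.tgt e)), (f e : ℤ)) -
        ∑ e ∈ univ.filter (fun e => ¬ p (G.src e) ∧ p (G.tgt e)), (f e : ℤ) := by
  classical
  have hsum : ∑ v ∈ univ.filter p, G.DD f v = G.flowValue s f := by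
    rw [Finset.sum_eq_single_of_mem s (by simp [hs])]
    · rfl
    · intro v hv hvs
      exact G.DD_eq_zero hc hvs (fun h => ht (h ▸ (Finset.mem_filter.mp hv).2))
  have hout : ∑ v ∈ univ.filter p, (∑ e ∈ univ.filter (fun e => G.src e = v), (f e : ℤ)) =
      ∑ e ∈ univ.filter (fun e => p (G.src e)), (f e : ℤ) := by
    rw [Finset.sum_fiberwise_eq_sum_filter univ (univ.filter p) G.src (fun e => (f e : ℤ))]
    apply Finset.sum_congr _ (fun _ _ => rfl)
    apply Finset.filter_congr
    intro e _
    simp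
  have hin : ∑ v ∈ univ.filter p, (∑ e ∈ univ.filter (fun e => G.tgt e = v), (f e : ℤ)) =
      ∑ e ∈ univ.filter (fun e => p (G.tgt e)), (f e : ℤ) := by
    rw [Finset.sum_fiberwise_eq_sum_filter univ (univ.filter p) G.tgt (fun e => (f e : ℤ))]
    apply Finset.sum_congr _ (fun _ _ => rfl)
    apply Finset.filter_congr
    intro e _
    simp
  have key : ∀ (q r : E → Prop), ∀ (_ : DecidablePred q) (_ : DecidablePred r),
      ∑ e ∈ univ.filter q, (f e : ℤ) =
        ∑ e ∈ univ.filter (fun e => q e ∧ r e), (f e : ℤ) +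
        ∑ e ∈ univ.filter (fun e => q e ∧ ¬ r e), (f e : ℤ) := by
    intro q r _ _
    rw [← Finset.sum_filter_add_sum_filter_not (univ.filter q) r, Finset.filter_filter,
      Finset.filter_filter]
  have k1 := key (fun e => p (G.src e)) (fun e => p (G.tgt e)) (by infer_instance) (by infer_instance)
  have k2 := key (fun e => p (G.tgt e)) (fun e => p (G.src e)) (by infer_instance) (by infer_instance)
  have hcomm : univ.filter (fun e => p (G.tgt e) ∧ p (G.src e)) =
      univ.filter (fun e => p (G.src e) ∧ p (G.tgt e)) := by
    apply Finset.filter_congr; intro e _; constructor <;> exact fun h => ⟨h.2, h.1⟩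
  rw [hcomm] at k2
  have hcomm2 : univ.filter (fun e => p (G.tgt e) ∧ ¬ p (G.src e)) =
      univ.filter (fun e => ¬ p (G.src e) ∧ p (G.tgt e)) := by
    apply Finset.filter_congr; intro e _; constructor <;> exact fun h => ⟨h.2, h.1⟩
  rw [hcomm2] at k2
  have hfv : G.flowValue s f = ∑ v ∈ univ.filter p, G.DD f v := hsum.symm
  rw [hfv]
  simp only [DD, Finset.sum_sub_distrib, hout, hin]
  rw [k1, k2]
  ring

set_option linter.unusedSectionVars false

lemma reachAvoid_mono (G : Digraph' V E) {C C' : Finset E} (h : C ⊆ C') {u v : V}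
    (hr : G.ReachAvoid C' u v) : G.ReachAvoid C u v :=
  Relation.ReflTransGen.mono (r := G.stepAvoid C') (p := G.stepAvoid C)
    (fun _ _ ⟨e, he, h1, h2⟩ => ⟨e, fun hm => he (h hm), h1, h2⟩) _ _ hr

lemma isCut_univ (G : Digraph' V E) {s t : V} (hst : s ≠ t) : G.IsCut s t Finset.univ := by
  intro h
  rcases Relation.ReflTransGen.cases_head h with h1 | ⟨c, ⟨e, he, -, -⟩, -⟩
  · exact hst h1
  · exact he (Finset.mem_univ e)

lemma weak_duality (G : Digraph' V E) {s t : V} {f : E → ℕ} {F C : Finset E}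
    (hf : G.IsFlow s t f) (hFf : ∀ e ∈ F, f e = 0) (hC : G.IsCut s t C) :
    G.flowValue s f ≤ ((C \ F).card : ℤ) := by
  classical
  set p : V → Prop := fun v => G.ReachAvoid (C ∪ F) s v with hp
  have hs : p s := Relation.ReflTransGen.refl
  have ht : ¬ p t := fun h => hC (G.reachAvoid_mono Finset.subset_union_left h)
  rw [G.value_eq_net hf.2 p hs ht]
  have hbound : ∑ e ∈ univ.filter (fun e => p (G.src e) ∧ ¬ p (G.tgt e)), (f e : ℤ)
      ≤ ((C \ F).card : ℤ) := by
    calc ∑ e ∈ univ.filter (fun e => p (G.src e) ∧ ¬ p (G.tgt e)), (f e : ℤ)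
        ≤ ∑ e ∈ univ.filter (fun e => p (G.src e) ∧ ¬ p (G.tgt e)),
            (if e ∈ C \ F then 1 else 0) := by
          apply Finset.sum_le_sum
          intro e he
          rw [Finset.mem_filter] at he
          obtain ⟨-, hsrc, htgt⟩ := he
          by_cases heF : e ∈ F
          · simp [hFf e heF]
            split <;> norm_num
          · have heC : e ∈ C := by
              by_contra heC
              exact htgt (Relation.ReflTransGen.tail hsrc
                ⟨e, by simp [Finset.mem_union, heC, heF], rfl, rfl⟩)
            rw [if_pos (Finset.mem_sdiff.mpr ⟨heC, heF⟩)]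
            exact_mod_cast hf.1 e
      _ = (((univ.filter (fun e => p (G.src e) ∧ ¬ p (G.tgt e))).filter
            (fun e => e ∈ C \ F)).card : ℤ) := Finset.sum_boole _ _
      _ ≤ ((C \ F).card : ℤ) := by
          have : ((univ.filter (fun e => p (G.src e) ∧ ¬ p (G.tgt e))).filter
              (fun e => e ∈ C \ F)) ⊆ C \ F := fun e he => (Finset.mem_filter.mp he).2
          exact_mod_cast Finset.card_le_card this
  have hB : 0 ≤ ∑ e ∈ univ.filter (fun e => ¬ p (G.src e) ∧ p (G.tgt e)), (f e : ℤ) :=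
    Finset.sum_nonneg (fun e _ => Int.natCast_nonneg _)
  linarith

lemma exists_nodup_chain_aux {α : Type*} (r : α → α → Prop) :
    ∀ (n : ℕ) (l : List α) (a b : α), l.length ≤ n → List.Chain r a l →
      (a :: l).getLast? = some b →
      ∃ l', List.Chain r a l' ∧ (a :: l').getLast? = some b ∧ (a :: l').Nodup ∧
        ∀ x ∈ l', x ∈ l := by
  intro n
  induction n with
  | zero =>
    intro l a b hlen hchain hlast
    have hl : l = [] := List.length_eq_zero_iff.mp (Nat.le_zero.mp hlen)
    subst hl
    exact ⟨[], List.Chain.nil, hlast, List.nodup_singleton a, by simp⟩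
  | succ n ih =>
    intro l a b hlen hchain hlast
    by_cases ha : a ∈ l
    · obtain ⟨l₁, l₂, rfl⟩ := List.append_of_mem ha
      have hchain2 : List.Chain r a l₂ := (List.isChain_cons_split.mp hchain).2
      have hlast2 : (a :: l₂).getLast? = some b := by
        have hsplit : a :: (l₁ ++ a :: l₂) = (a :: l₁) ++ (a :: l₂) := by simp
        rw [hsplit, List.getLast?_append_of_ne_nil _ (List.cons_ne_nil a l₂)] at hlast
        exact hlast
      have hlen2 : l₂.length ≤ n := by
        simp only [List.length_append, List.length_cons] at hlen
        omega
      obtain ⟨l', h1, h2, h3, h4⟩ := ih l₂ a b hlen2 hchain2 hlast2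
      exact ⟨l', h1, h2, h3, fun x hx => by simp [h4 x hx]⟩
    · cases l with
      | nil => exact ⟨[], hchain, hlast, List.nodup_singleton a, by simp⟩
      | cons c l₁ =>
        replace hchain := List.chain_cons.mp hchain
        have hlast2 : (c :: l₁).getLast? = some b := by
          rwa [List.getLast?_cons_cons] at hlast
        have hlen2 : l₁.length ≤ n := by
          simp only [List.length_cons] at hlen
          omega
        obtain ⟨l', h1, h2, h3, h4⟩ := ih l₁ c b hlen2 hchain.2 hlast2
        refine ⟨c :: l', List.chain_cons.mpr ⟨hchain.1, h1⟩,
          by rwa [List.getLast?_cons_cons], ?_, ?_⟩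
        · refine List.nodup_cons.mpr ⟨?_, h3⟩
          intro hmem
          apply ha
          rcases List.mem_cons.mp hmem with h | h
          · exact h ▸ List.mem_cons_self (a := c) (l := l₁)
          · exact List.mem_cons_of_mem _ (h4 a h)
        · intro x hx
          rcases List.mem_cons.mp hx with h | h
          · exact h ▸ List.mem_cons_self (a := c) (l := l₁)
          · exact List.mem_cons_of_mem _ (h4 x h)

lemma aug_step (G : Digraph' V E) (f f₁ : E → ℕ) (e₀ : E) (v c : V)
    (hcap : ∀ e, f e ≤ 1) (hf₁e₀ : f₁ e₀ = f e₀)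
    (he₀s : (G.residual f).src e₀ = v) (he₀t : (G.residual f).tgt e₀ = c) (hvc : v ≠ c) :
    ∀ w, G.DD (fun e => if e = e₀ then 1 - f e₀ else f₁ e) w =
      G.DD f₁ w + (if w = v then 1 else 0) - (if w = c then 1 else 0) := by
  intro w
  have ec : ∀ (x y : V), ((if x = y then (1:ℤ) else 0)) = (if y = x then 1 else 0) := by
    intro x y
    by_cases h : x = y
    · simp [h]
    · have h2 : y ≠ x := fun hh => h hh.symm
      simp [h, h2]
  rcases Nat.le_one_iff_eq_zero_or_eq_one.mp (hcap e₀) with hfe | hfe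
  · -- forward edge: f e₀ = 0, flip to 1
    have hsrc : G.src e₀ = v := by simpa [residual, hfe] using he₀s
    have htgt : G.tgt e₀ = c := by simpa [residual, hfe] using he₀t
    have hcast : ∀ e, ((if e = e₀ then 1 - f e₀ else f₁ e : ℕ) : ℤ) =
        (f₁ e : ℤ) + (if e = e₀ then 1 else 0) := by
      intro e
      by_cases h : e = e₀ <;> simp [h, hfe, hf₁e₀]
    simp only [DD, hcast, Finset.sum_add_distrib, Finset.sum_ite_eq' , Finset.mem_filter,
      Finset.mem_univ, true_and, hsrc, htgt]
    rw [ec v w, ec c w]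
    ring
  · -- backward edge: f e₀ = 1, flip to 0
    have hsrc : G.tgt e₀ = v := by simpa [residual, hfe] using he₀s
    have htgt : G.src e₀ = c := by simpa [residual, hfe] using he₀t
    have hcast : ∀ e, ((if e = e₀ then 1 - f e₀ else f₁ e : ℕ) : ℤ) =
        (f₁ e : ℤ) - (if e = e₀ then 1 else 0) := by
      intro e
      by_cases h : e = e₀ <;> simp [h, hfe, hf₁e₀]
    simp only [DD, hcast, Finset.sum_sub_distrib, Finset.sum_ite_eq', Finset.mem_filter,
      Finset.mem_univ, true_and, hsrc, htgt]
    rw [ec v w, ec c w]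
    ring

lemma aug_lemma (G : Digraph' V E) (t : V) (f : E → ℕ) (F : Finset E)
    (hcap : ∀ e, f e ≤ 1) (hFf : ∀ e ∈ F, f e = 0) :
    ∀ (l : List V) (v : V), List.Chain ((G.residual f).stepAvoid F) v l →
      (v :: l).getLast? = some t → (v :: l).Nodup →
      ∃ f' : E → ℕ, (∀ e, f' e ≤ 1) ∧ (∀ e ∈ F, f' e = 0) ∧
        (∀ e, f' e ≠ f e → (G.residual f).src e ∈ v :: l) ∧
        ∀ w, G.DD f' w = G.DD f w + (if w = v then 1 else 0) - (if w = t then 1 else 0) := by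
  intro l
  induction l with
  | nil =>
    intro v _ hlast _
    have hv : v = t := by simpa using hlast
    exact ⟨f, hcap, hFf, fun e he => absurd rfl he, fun w => by subst hv; ring⟩
  | cons c l ih =>
    intro v hchain hlast hnodup
    replace hchain := List.chain_cons.mp hchain
    obtain ⟨⟨e₀, he₀F, he₀s, he₀t⟩, hchain2⟩ := hchain
    obtain ⟨f₁, h1, h2, h3, h4⟩ := ih c hchain2 (by rwa [List.getLast?_cons_cons] at hlast)
      (List.Nodup.of_cons hnodup)
    have hvnotin : v ∉ c :: l := (List.nodup_cons.mp hnodup).1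
    have hvc : v ≠ c := fun h => hvnotin (h ▸ List.mem_cons_self (a := c) (l := l))
    have hf₁e₀ : f₁ e₀ = f e₀ := by
      by_contra h
      exact hvnotin (he₀s ▸ h3 e₀ h)
    refine ⟨fun e => if e = e₀ then 1 - f e₀ else f₁ e, ?_, ?_, ?_, ?_⟩
    · intro e
      by_cases h : e = e₀
      · simp [h]
      · simpa [h] using h1 e
    · intro e heF
      have : e ≠ e₀ := fun h => he₀F (h ▸ heF)
      simpa [this] using h2 e heF
    · intro e he
      by_cases h : e = e₀
      · subst h
        exact he₀s ▸ List.mem_cons_self (a := v) (l := c :: l)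
      · simp only [h, if_false] at he
        exact List.mem_cons_of_mem _ (h3 e he)
    · intro w
      rw [G.aug_step f f₁ e₀ v c hcap hf₁e₀ he₀s he₀t hvc w, h4 w]
      ring

lemma exists_augmented (G : Digraph' V E) {s t : V} {f : E → ℕ} {F : Finset E}
    (hf : G.IsFlow s t f) (hFf : ∀ e ∈ F, f e = 0)
    (hreach : (G.residual f).ReachAvoid F s t) (hst : s ≠ t) :
    ∃ f' : E → ℕ, G.IsFlow s t f' ∧ (∀ e ∈ F, f' e = 0) ∧
      G.flowValue s f' = G.flowValue s f + 1 := by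
  obtain ⟨l, hchain, hlast⟩ := List.exists_isChain_cons_of_relationReflTransGen hreach
  have hlast? : (s :: l).getLast? = some t := by
    rw [List.getLast?_eq_getLast (List.cons_ne_nil s l), hlast]
  obtain ⟨l', h1, h2, h3, -⟩ :=
    exists_nodup_chain_aux ((G.residual f).stepAvoid F) l.length l s t le_rfl hchain hlast?
  obtain ⟨f', hc1, hc2, -, hD⟩ := G.aug_lemma t f F hf.1 hFf l' s h1 h2 h3
  refine ⟨f', ⟨hc1, ?_⟩, hc2, ?_⟩
  · intro w hws hwt
    have hD0 := hD w
    rw [if_neg hws, if_neg hwt, G.DD_eq_zero hf.2 hws hwt] at hD0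
    have h0 : ((∑ e ∈ univ.filter (fun e => G.tgt e = w), f' e : ℕ) : ℤ) =
        ((∑ e ∈ univ.filter (fun e => G.src e = w), f' e : ℕ) : ℤ) := by
      push_cast
      simp only [DD] at hD0
      omega
    exact_mod_cast h0
  · have hDs := hD s
    rw [if_pos rfl, if_neg hst] at hDs
    rw [G.flowValue_eq_DD, G.flowValue_eq_DD, hDs]
    ring

lemma exists_cut_of_max (G : Digraph' V E) {s t : V} (hst : s ≠ t) {f : E → ℕ} {F : Finset E}
    (hf : G.IsFlow s t f) (hFf : ∀ e ∈ F, f e = 0)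
    (hmax : ∀ f', G.IsFlow s t f' → (∀ e ∈ F, f' e = 0) →
      G.flowValue s f' ≤ G.flowValue s f) :
    ∃ C₀ : Finset E, (∀ e ∈ C₀, e ∉ F) ∧ G.IsCut s t (C₀ ∪ F) ∧
      ((C₀.card : ℤ) = G.flowValue s f) := by
  classical
  set p : V → Prop := fun v => (G.residual f).ReachAvoid F s v with hp
  have hs : p s := Relation.ReflTransGen.refl
  have ht : ¬ p t := by
    intro h
    obtain ⟨f', hf', hFf', hval⟩ := G.exists_augmented hf hFf h hst
    have := hmax f' hf' hFf'
    omega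
  set C₀ := univ.filter (fun e => e ∉ F ∧ p (G.src e) ∧ ¬ p (G.tgt e)) with hC₀
  have hbwd : ∀ e, e ∉ F → ¬ p (G.src e) → p (G.tgt e) → f e = 0 := by
    intro e heF hsrc htgt
    by_contra h
    have hf1 : f e = 1 := by have := hf.1 e; omega
    exact hsrc (Relation.ReflTransGen.tail htgt
      ⟨e, heF, by simp [residual, hf1], by simp [residual, hf1]⟩)
  have hfwd : ∀ e, e ∉ F → p (G.src e) → ¬ p (G.tgt e) → f e = 1 := by
    intro e heF hsrc htgt
    by_contra h
    have hf0 : f e = 0 := by have := hf.1 e; omega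
    exact htgt (Relation.ReflTransGen.tail hsrc
      ⟨e, heF, by simp [residual, hf0], by simp [residual, hf0]⟩)
  refine ⟨C₀, fun e he => ((Finset.mem_filter.mp he).2).1, ?_, ?_⟩
  · intro hreach
    apply ht
    have key : ∀ v, G.ReachAvoid (C₀ ∪ F) s v → p v := by
      intro v hv
      induction hv with
      | refl => exact hs
      | @tail b v hab hbc ih =>
        obtain ⟨e, heCF, hesrc, hetgt⟩ := hbc
        rw [Finset.mem_union] at heCF
        push_neg at heCF
        by_contra hvp
        rcases Nat.le_one_iff_eq_zero_or_eq_one.mp (hf.1 e) with h0 | h1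
        · exact hvp (Relation.ReflTransGen.tail ih
            ⟨e, heCF.2, by simp [residual, h0, hesrc], by simp [residual, h0, hetgt]⟩)
        · exact heCF.1 (Finset.mem_filter.mpr ⟨Finset.mem_univ e,
            heCF.2, hesrc ▸ ih, hetgt ▸ hvp⟩)
    exact key t hreach
  · rw [G.value_eq_net hf.2 p hs ht]
    have hB : ∑ e ∈ univ.filter (fun e => ¬ p (G.src e) ∧ p (G.tgt e)), (f e : ℤ) = 0 := by
      apply Finset.sum_eq_zero
      intro e he
      rw [Finset.mem_filter] at he
      by_cases heF : e ∈ F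
      · exact_mod_cast hFf e heF
      · exact_mod_cast hbwd e heF he.2.1 he.2.2
    have hA : ∑ e ∈ univ.filter (fun e => p (G.src e) ∧ ¬ p (G.tgt e)), (f e : ℤ)
        = (C₀.card : ℤ) := by
      rw [← Finset.sum_filter_add_sum_filter_not
        (univ.filter (fun e => p (G.src e) ∧ ¬ p (G.tgt e))) (fun e => e ∈ F)]
      have hz : ∑ e ∈ (univ.filter (fun e => p (G.src e) ∧ ¬ p (G.tgt e))).filter
          (fun e => e ∈ F), (f e : ℤ) = 0 := by
        apply Finset.sum_eq_zero
        intro e he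
        exact_mod_cast hFf e (Finset.mem_filter.mp he).2
      have hset : (univ.filter (fun e => p (G.src e) ∧ ¬ p (G.tgt e))).filter
          (fun e => e ∉ F) = C₀ := by
        rw [Finset.filter_filter, hC₀]
        apply Finset.filter_congr
        intro e _
        constructor
        · exact fun h => ⟨h.2, h.1.1, h.1.2⟩
        · exact fun h => ⟨⟨h.2.1, h.2.2⟩, h.1⟩
      have ho : ∑ e ∈ (univ.filter (fun e => p (G.src e) ∧ ¬ p (G.tgt e))).filter
          (fun e => e ∉ F), (f e : ℤ) = (C₀.card : ℤ) := by
        rw [hset]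
        rw [Finset.sum_congr rfl (fun e he => ?_), Finset.sum_const, nsmul_eq_mul, mul_one]
        rw [hC₀, Finset.mem_filter] at he
        exact_mod_cast congrArg (Nat.cast (R := ℤ)) (hfwd e he.2.1 he.2.2.1 he.2.2.2)
      rw [hz, ho]
      ring
    rw [hA, hB]
    ring

lemma exists_minimal_cut (G : Digraph' V E) (s t : V) :
    ∀ (n : ℕ) (C : Finset E), C.card ≤ n → G.IsCut s t C →
      ∃ C', C' ⊆ C ∧ G.IsMinimalCut s t C' := by
  intro n
  induction n with
  | zero =>
    intro C hc hcut
    have hC : C = ∅ := Finset.card_eq_zero.mp (Nat.le_zero.mp hc)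
    subst hC
    exact ⟨∅, subset_rfl, hcut, fun C' hC' => absurd hC' (Finset.not_ssubset_empty C')⟩
  | succ n ih =>
    intro C hc hcut
    by_cases h : ∀ C', C' ⊂ C → ¬ G.IsCut s t C'
    · exact ⟨C, subset_rfl, hcut, h⟩
    · push_neg at h
      obtain ⟨C', hsub, hcut'⟩ := h
      have hlt : C'.card ≤ n := by
        have := Finset.card_lt_card hsub
        omega
      obtain ⟨C'', h1, h2⟩ := ih C' hlt hcut'
      exact ⟨C'', h1.trans hsub.subset, h2⟩

lemma exists_maxflow (G : Digraph' V E) (s t : V) (hst : s ≠ t) (F : Finset E) :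
    ∃ m, G.IsMaxFlowValue s t F m := by
  have hbdd : ∃ b : ℤ, ∀ z : ℤ,
      (∃ f, G.IsFlow s t f ∧ (∀ e ∈ F, f e = 0) ∧ G.flowValue s f = z) → z ≤ b := by
    refine ⟨(((Finset.univ : Finset E) \ F).card : ℤ), ?_⟩
    rintro z ⟨f, hf, hFf, rfl⟩
    exact G.weak_duality hf hFf (G.isCut_univ hst)
  have hinh : ∃ z : ℤ, ∃ f, G.IsFlow s t f ∧ (∀ e ∈ F, f e = 0) ∧ G.flowValue s f = z := by
    refine ⟨0, (fun _ => 0), ⟨fun e => by simp, fun v _ _ => by simp⟩, fun e _ => rfl, ?_⟩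
    simp [flowValue]
  obtain ⟨m, hm1, hm2⟩ := Int.exists_greatest_of_bdd hbdd hinh
  exact ⟨m, hm1, fun f hf hFf => hm2 _ ⟨f, hf, hFf, rfl⟩⟩


end Digraph'

/-- For every set `F` of `k` edges of `G`, the maximum
`(s,t)`-flow value of `G − F` equals the minimum, over all minimal `(s,t)`-cuts `C`
of `G` with `|C| ≤ λ + k`, of `|C| − |C ∩ F|`. -/
theorem stmt16 {V E : Type} [Fintype V] [DecidableEq V] [Fintype E] [DecidableEq E]
    (G : Digraph' V E) (s t : V) (hst : s ≠ t)
    (lam k : ℕ) (hmax : G.IsMaxFlowValue s t ∅ lam)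
    (F : Finset E) (hF : F.card = k) (M : ℤ) :
    G.IsMaxFlowValue s t F M ↔
      IsLeast {m : ℤ | ∃ C : Finset E, G.IsMinimalCut s t C ∧ C.card ≤ lam + k ∧
        m = (C.card : ℤ) - ((C ∩ F).card : ℤ)} M := by
  classical
  obtain ⟨M₀, hM₀⟩ := G.exists_maxflow s t hst F
  have hM₀lam : M₀ ≤ (lam : ℤ) := by
    obtain ⟨⟨f, hf, hFf, hval⟩, -⟩ := id hM₀
    have := hmax.2 f hf (by simp)
    omega
  have keyLeast : IsLeast {m : ℤ | ∃ C : Finset E, G.IsMinimalCut s t C ∧ C.card ≤ lam + k ∧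
      m = (C.card : ℤ) - ((C ∩ F).card : ℤ)} M₀ := by
    obtain ⟨⟨f, hf, hFf, hval⟩, hub⟩ := id hM₀
    constructor
    · obtain ⟨C₀, hC₀F, hcut, hcard⟩ := G.exists_cut_of_max hst hf hFf
        (fun f' h1 h2 => by rw [hval]; exact hub f' h1 h2)
      obtain ⟨C, hCsub, hCmin⟩ := G.exists_minimal_cut s t (C₀ ∪ F).card _ le_rfl hcut
      have hdiffsub : C \ F ⊆ C₀ := by
        intro e he
        rw [Finset.mem_sdiff] at he
        rcases Finset.mem_union.mp (hCsub he.1) with h | h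
        · exact h
        · exact absurd h he.2
      have h1 : ((C \ F).card : ℤ) ≤ (C₀.card : ℤ) := by
        exact_mod_cast Finset.card_le_card hdiffsub
      have h2 : M₀ ≤ ((C \ F).card : ℤ) := by
        rw [← hval]
        exact G.weak_duality hf hFf hCmin.1
      have heq : ((C \ F).card : ℤ) = M₀ := by rw [hval] at hcard; omega
      have hcards : (C \ F).card + (C ∩ F).card = C.card := Finset.card_sdiff_add_card_inter C F
      have hk : (C ∩ F).card ≤ k := hF ▸ Finset.card_le_card Finset.inter_subset_right
      refine ⟨C, hCmin, ?_, ?_⟩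
      · omega
      · omega
    · rintro m ⟨C, hCmin, -, rfl⟩
      have h2 : M₀ ≤ ((C \ F).card : ℤ) := by
        rw [← hval]
        exact G.weak_duality hf hFf hCmin.1
      have hcards : (C \ F).card + (C ∩ F).card = C.card := Finset.card_sdiff_add_card_inter C F
      omega
  constructor
  · intro h
    have hMM : M = M₀ := by
      apply le_antisymm
      · obtain ⟨⟨f, hf, hFf, hval⟩, -⟩ := id h
        rw [← hval]
        exact hM₀.2 f hf hFf
      · obtain ⟨⟨f, hf, hFf, hval⟩, -⟩ := id hM₀
        rw [← hval]
        exact h.2 f hf hFf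
    rw [hMM]
    exact keyLeast
  · intro h
    have hMM : M = M₀ := h.unique keyLeast
    rw [hMM]
    exact hM₀
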